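/- Let F be a planar necklace (a necklace in ℝ^2) with no cut points, and let U be a bounded connected component of ℝ^2 \ F. Then for every finite word σ over I, f_σ(U) is a bounded connected component of ℝ^2 \ F; in particular f_σ(U) ∩ F = ∅. -/

import Mathlib

open Set Topology Metric Bornology

noncomputable section

/-- Euclidean space `ℝ^d`. -/
abbrev Euc (d : ℕ) := EuclideanSpace ℝ (Fin d)

/-- A fractal necklace in `ℝ^d`: the attractor `F` of a necklace IFS `f_1, …, f_n`
(`n ≥ 3`) of contractive homeomorphisms of `ℝ^d`, where cyclically adjacent 1-level
copies meet in a single point (a main node `z k`) and non-adjacent copies are disjoint. -/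
structure Necklace (d : ℕ) where
  n : ℕ
  hn : 3 ≤ n
  f : Fin n → (Euc d ≃ₜ Euc d)
  contr : ∀ k, ∃ c : NNReal, c < 1 ∧ LipschitzWith c (f k)
  F : Set (Euc d)
  Fne : F.Nonempty
  Fcpt : IsCompact F
  Fattr : F = ⋃ k, (f k) '' F
  z : Fin n → Euc d
  hz : ∀ k : Fin n, (f k) '' F ∩ (f (k + ⟨1, by omega⟩)) '' F = {z k}
  hdisj : ∀ m k : Fin n, m ≠ k → m ≠ k + ⟨1, by omega⟩ → k ≠ m + ⟨1, by omega⟩ →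
    (f m) '' F ∩ (f k) '' F = ∅

namespace Necklace

variable {d : ℕ}

/-- The digit `1` of `Fin n`. -/
def one (N : Necklace d) : Fin N.n := ⟨1, by have := N.hn; omega⟩

/-- The homeomorphism `f_σ = f_{i₁} ∘ ⋯ ∘ f_{i_m}` associated to a word `σ = i₁⋯i_m`. -/
def word (N : Necklace d) : List (Fin N.n) → (Euc d ≃ₜ Euc d)
  | [] => Homeomorph.refl _
  | i :: s => (N.word s).trans (N.f i)

/-- The copy `F_σ = f_σ(F)` of the necklace. -/
def copy (N : Necklace d) (σ : List (Fin N.n)) : Set (Euc d) := N.word σ '' N.F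

/-- `c_m(x)`: the number of words `σ` of length `m` with `x ∈ F_σ`. -/
def cnt (N : Necklace d) (m : ℕ) (x : Euc d) : ℕ :=
  Set.ncard {σ : List (Fin N.n) | σ.length = m ∧ x ∈ N.copy σ}

/-- The boundary `∂_F F_k = {z_{k-1}, z_k}` of the 1-level copy `F_k` in `F`. -/
def bdry (N : Necklace d) (k : Fin N.n) : Set (Euc d) := {N.z (k - N.one), N.z k}

/-- A necklace is stable if for each `k` at least two second-level copies `F_{kj}`
meet `∂_F F_k`. -/
def Stable (N : Necklace d) : Prop :=
  ∀ k : Fin N.n,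
    2 ≤ Set.ncard {A : Set (Euc d) |
      (∃ j : Fin N.n, A = N.f k '' (N.f j '' N.F)) ∧ (A ∩ N.bdry k).Nonempty}

/-- A necklace is good if `∂_F F_k` is not contained in any second-level copy `F_{kj}`. -/
def Good (N : Necklace d) : Prop :=
  ∀ k j : Fin N.n, ¬ (N.bdry k ⊆ N.f k '' (N.f j '' N.F))

/-- A necklace is of bounded ramification if `{c_m(z_k)}_m` is bounded for each `k`. -/
def BoundedRamification (N : Necklace d) : Prop :=
  ∀ k : Fin N.n, ∃ C : ℕ, ∀ m : ℕ, N.cnt m (N.z k) ≤ C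

/-- `M_F`: the set of points that are main nodes of some copy of `F`. -/
def MF (N : Necklace d) : Set (Euc d) :=
  {x | ∃ (σ : List (Fin N.n)) (k : Fin N.n), x = N.word σ (N.z k)}

/-- A necklace has no cut points if `F \ {x}` is connected for every `x ∈ F`. -/
def NoCutPoints (N : Necklace d) : Prop :=
  ∀ x ∈ N.F, IsConnected (N.F \ {x})

/-- Property I: each 1-level copy `F_k` has an arc from `z_{k-1}` to `z_k` passing
through at least two main nodes of `F_k`. -/
def PropertyI (N : Necklace d) : Prop :=
  ∀ k : Fin N.n, ∃ γ : Path (N.z (k - N.one)) (N.z k),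
    Function.Injective γ ∧ (∀ t, γ t ∈ N.f k '' N.F) ∧
    ∃ p q : Euc d, p ≠ q ∧ (∃ j, p = N.f k (N.z j)) ∧ (∃ j, q = N.f k (N.z j)) ∧
      p ∈ Set.range γ ∧ q ∈ Set.range γ

/-- A necklace is self-similar if the maps of its NIFS are (contractive) similitudes. -/
def SelfSimilar (N : Necklace d) : Prop :=
  ∀ k : Fin N.n, ∃ c : ℝ, 0 < c ∧ c < 1 ∧ ∀ x y, dist (N.f k x) (N.f k y) = c * dist x y

/-- The open set condition for the NIFS of a necklace. -/
def OSC (N : Necklace d) : Prop :=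
  ∃ V : Set (Euc d), V.Nonempty ∧ IsOpen V ∧ IsBounded V ∧
    (∀ k, N.f k '' V ⊆ V) ∧ ∀ j k : Fin N.n, j ≠ k → N.f j '' V ∩ N.f k '' V = ∅

end Necklace

namespace NecklaceAux

open Set Metric Bornology

/-- Closure of a connected component inside an open set, intersected with the set,
is the component itself. -/
lemma closure_connectedComponentIn_inter {X : Type*} [TopologicalSpace X]
    [LocallyConnectedSpace X] {s : Set X} (hs : IsOpen s) (x : X) :
    closure (connectedComponentIn s x) ∩ s ⊆ connectedComponentIn s x := by
  rintro y ⟨hyc, hys⟩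
  have hopen : IsOpen (connectedComponentIn s y) := hs.connectedComponentIn
  obtain ⟨p, hp1, hp2⟩ := mem_closure_iff.mp hyc _ hopen (mem_connectedComponentIn hys)
  have h1 : connectedComponentIn s y = connectedComponentIn s p := connectedComponentIn_eq hp1
  have h2 : connectedComponentIn s x = connectedComponentIn s p := connectedComponentIn_eq hp2
  rw [h2, ← h1]
  exact mem_connectedComponentIn hys

/-- Escape-to-infinity lemma: every point of a bounded connected component `V` of the
complement of a nonempty set `K` is, for every `p`, no farther from `p` than some point
of `K`. -/
lemma dist_le_of_mem_bounded_component {d : ℕ} {K : Set (Euc d)} (hK : K.Nonempty)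
    {V : Set (Euc d)} (hVb : IsBounded V) {x₀ : Euc d}
    (hV : V = connectedComponentIn Kᶜ x₀) {v : Euc d} (hv : v ∈ V) (p : Euc d) :
    ∃ y ∈ K, dist v p ≤ dist y p := by
  by_contra hcon
  push_neg at hcon
  obtain ⟨y₀, hy₀⟩ := hK
  have hd0 : 0 < dist v p := lt_of_le_of_lt dist_nonneg (hcon y₀ hy₀)
  set r : ℝ → Euc d := fun t => v + t • (v - p) with hr
  have hdist : ∀ t : ℝ, 0 ≤ t → dist (r t) p = (1 + t) * dist v p := by
    intro t ht
    have : r t - p = (1 + t) • (v - p) := by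
      simp only [hr]
      module
    rw [dist_eq_norm, this, norm_smul, Real.norm_eq_abs, abs_of_nonneg (by linarith),
      ← dist_eq_norm]
  set R : Set (Euc d) := r '' Ici 0 with hR
  have hvR : v ∈ R := ⟨0, mem_Ici.mpr le_rfl, by simp [hr]⟩
  have hRK : R ⊆ Kᶜ := by
    rintro _ ⟨t, ht, rfl⟩ hmem
    have ht' : (0:ℝ) ≤ t := ht
    have h1 := hcon _ hmem
    have h2 := hdist t ht'
    nlinarith [dist_nonneg (x := v) (y := p)]
  have hRconn : IsPreconnected R := by
    apply isPreconnected_Ici.image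
    fun_prop
  have hcompv : connectedComponentIn Kᶜ v = V := by
    rw [hV]
    exact (connectedComponentIn_eq (hV ▸ hv)).symm
  have hRV : R ⊆ V := by
    rw [← hcompv]
    exact hRconn.subset_connectedComponentIn hvR hRK
  obtain ⟨ρ, hρ⟩ := hVb.subset_ball p
  set t := max 0 (ρ / dist v p) with htdef
  have ht0 : (0:ℝ) ≤ t := le_max_left _ _
  have hmem : r t ∈ V := hRV ⟨t, ht0, rfl⟩
  have hlt : dist (r t) p < ρ := hρ hmem
  have hge : ρ ≤ t * dist v p := by
    rw [htdef]
    calc ρ = (ρ / dist v p) * dist v p := by field_simp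
    _ ≤ max 0 (ρ / dist v p) * dist v p := by
        apply mul_le_mul_of_nonneg_right (le_max_right _ _) (le_of_lt hd0)
  rw [hdist t ht0] at hlt
  nlinarith

end NecklaceAux

namespace Necklace

open Set Metric Bornology NecklaceAux

variable {d : ℕ} (N : Necklace d)

instance : NeZero N.n := ⟨by have := N.hn; omega⟩

lemma one_eq : N.one = (1 : Fin N.n) := by
  have := N.hn
  apply Fin.ext
  simp [one, Fin.val_one', Nat.mod_eq_of_lt (by omega : 1 < N.n)]

lemma one_ne_zero' : N.one ≠ 0 := by
  intro h
  have := congrArg Fin.val h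
  simp [one] at this

lemma two_ne_zero' : N.one + N.one ≠ 0 := by
  have h3 := N.hn
  intro h
  have := congrArg Fin.val h
  simp [one, Fin.add_def, Nat.mod_eq_of_lt (by omega : 1 + 1 < N.n)] at this

lemma hz' (k : Fin N.n) : N.f k '' N.F ∩ N.f (k + N.one) '' N.F = {N.z k} := N.hz k

lemma hdisj' (m k : Fin N.n) (h1 : m ≠ k) (h2 : m ≠ k + N.one) (h3 : k ≠ m + N.one) :
    N.f m '' N.F ∩ N.f k '' N.F = ∅ := N.hdisj m k h1 h2 h3

lemma copy_subset (k : Fin N.n) : N.f k '' N.F ⊆ N.F := by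
  conv_rhs => rw [N.Fattr]
  exact subset_iUnion (fun k => N.f k '' N.F) k

lemma z_mem_left (k : Fin N.n) : N.z k ∈ N.f k '' N.F := by
  have : N.z k ∈ ({N.z k} : Set (Euc d)) := rfl
  rw [← N.hz' k] at this
  exact this.1

lemma z_mem_right (k : Fin N.n) : N.z k ∈ N.f (k + N.one) '' N.F := by
  have : N.z k ∈ ({N.z k} : Set (Euc d)) := rfl
  rw [← N.hz' k] at this
  exact this.2

/-- Pairwise intersections of distinct level-1 copies lie in the node set. -/
lemma inter_pairs (j k : Fin N.n) (hjk : j ≠ k) :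
    N.f j '' N.F ∩ N.f k '' N.F ⊆ {N.z (k - N.one), N.z k} := by
  by_cases h1 : j = k + N.one
  · subst h1
    rw [inter_comm, N.hz' k]
    exact fun a ha => Or.inr ha
  by_cases h2 : k = j + N.one
  · have hk : k - N.one = j := by rw [h2]; abel
    have heq : N.f j '' N.F ∩ N.f k '' N.F = {N.z j} := by rw [h2]; exact N.hz' j
    rw [heq, hk]
    exact fun a ha => Or.inl ha
  · rw [N.hdisj' j k hjk h1 h2]
    exact empty_subset _

variable {N}

section NoCut

variable (hnc : N.NoCutPoints)
include hnc

/-- The attractor has at least three points. -/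
lemma exists_third (x y : Euc d) : ∃ w ∈ N.F, w ≠ x ∧ w ≠ y := by
  by_contra hcon
  push_neg at hcon
  have hsub : N.F ⊆ {x, y} := by
    intro c hc
    rcases eq_or_ne c x with h | h
    · exact Or.inl h
    · exact Or.inr (hcon c hc h)
  obtain ⟨a, ha⟩ := N.Fne
  obtain ⟨b, hbF, hba⟩ := (hnc a ha).nonempty
  rw [mem_singleton_iff] at hba
  have hF2 : N.F = {a, b} := by
    apply Subset.antisymm
    · intro c hc
      have hca := hsub hc
      have haa := hsub ha
      have hbb := hsub hbF
      simp only [mem_insert_iff, mem_singleton_iff] at hca haa hbb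
      rcases hca with h | h <;> rcases haa with h1 | h1 <;> rcases hbb with h2 | h2 <;>
        first
          | (exact Or.inl (h.trans h1.symm))
          | (exact Or.inr (h.trans h2.symm))
          | (exact absurd (h2.trans h1.symm) hba)
    · rintro c (rfl | rfl)
      exacts [ha, hbF]
  have hcopy : ∀ k, N.f k '' N.F = N.F := by
    intro k
    apply Subset.antisymm (N.copy_subset k)
    have hu : N.f k a ∈ N.f k '' N.F := mem_image_of_mem _ ha
    have hv : N.f k b ∈ N.f k '' N.F := mem_image_of_mem _ hbF
    have huv : N.f k a ≠ N.f k b := fun h => hba ((N.f k).injective h).symm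
    have h1 := N.copy_subset k hu
    have h2 := N.copy_subset k hv
    rw [hF2] at h1 h2
    simp only [mem_insert_iff, mem_singleton_iff] at h1 h2
    intro c hc
    rw [hF2] at hc
    simp only [mem_insert_iff, mem_singleton_iff] at hc
    rcases hc with rfl | rfl
    · rcases h1 with h | h
      · rw [← h]; exact hu
      · rcases h2 with h' | h'
        · rw [← h']; exact hv
        · exact absurd (h.trans h'.symm) huv
    · rcases h2 with h' | h'
      · rcases h1 with h | h
        · exact absurd (h.trans h'.symm) huv
        · rw [← h]; exact hu
      · rw [← h']; exact hv
  have h0 := N.hz' 0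
  rw [hcopy 0, hcopy (0 + N.one), inter_self] at h0
  rw [h0, mem_singleton_iff] at ha hbF
  exact hba (hbF.trans ha.symm)

/-- The attractor is connected. -/
lemma F_conn : IsConnected N.F := by
  obtain ⟨x, hx⟩ := N.Fne
  have hconn := hnc x hx
  have hclo : closure (N.F \ {x}) ⊆ N.F := by
    rw [IsClosed.closure_subset_iff N.Fcpt.isClosed]
    exact diff_subset
  by_cases hxc : x ∈ closure (N.F \ {x})
  · have : N.F = closure (N.F \ {x}) := by
      apply Subset.antisymm _ hclo
      intro a haF
      rcases eq_or_ne a x with rfl | h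
      · exact hxc
      · exact subset_closure ⟨haF, h⟩
    rw [this]
    exact hconn.closure
  · -- `x` is isolated in `F`; use a third point to contradict connectivity of `F \ {y}`
    exfalso
    obtain ⟨y, hyF, hyx⟩ := (hnc x hx).nonempty
    rw [mem_singleton_iff] at hyx
    obtain ⟨w, hwF, hwx, hwy⟩ := exists_third hnc x y
    have hcloeq : closure (N.F \ {x}) = N.F \ {x} := by
      apply Subset.antisymm _ subset_closure
      intro a hac
      refine ⟨hclo hac, ?_⟩
      rw [mem_singleton_iff]
      rintro rfl
      exact hxc hac
    have hconn' := (hnc y hyF).isPreconnected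
    have := hconn' (closure (N.F \ {x}))ᶜ ({x}ᶜ)
      (isOpen_compl_iff.mpr isClosed_closure) (isOpen_compl_iff.mpr isClosed_singleton)
      ?_ ?_ ?_
    · obtain ⟨a, ⟨haF, hay⟩, hac, hax⟩ := this
      rw [mem_singleton_iff] at hay
      rw [mem_compl_iff, mem_singleton_iff] at hax
      exact hac (subset_closure ⟨haF, hax⟩)
    · intro a ⟨haF, hay⟩
      rcases eq_or_ne a x with rfl | h
      · left
        rw [mem_compl_iff, hcloeq]
        exact fun hh => hh.2 rfl
      · exact Or.inr h
    · refine ⟨x, ⟨hx, ?_⟩, ?_⟩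
      · rw [mem_singleton_iff]; exact fun h => hyx h.symm
      · rw [mem_compl_iff, hcloeq]
        exact fun hh => hh.2 rfl
    · exact ⟨w, ⟨⟨hwF, by rwa [mem_singleton_iff]⟩, by rwa [mem_compl_iff, mem_singleton_iff]⟩⟩

/-- A level-1 copy minus a subsingleton is preconnected. -/
lemma copy_diff_preconnected (j : Fin N.n) (T : Set (Euc d))
    (hT : (T ∩ (N.f j '' N.F)).Subsingleton) :
    IsPreconnected ((N.f j '' N.F) \ T) := by
  have heq : (N.f j '' N.F) \ T = (N.f j '' N.F) \ (T ∩ (N.f j '' N.F)) := by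
    ext a; simp only [mem_diff, mem_inter_iff]; tauto
  rw [heq]
  rcases (T ∩ (N.f j '' N.F)).eq_empty_or_nonempty with h | ⟨p, hp⟩
  · rw [h, diff_empty]
    exact ((F_conn hnc).image _ (N.f j).continuous.continuousOn).isPreconnected
  · rw [hT.eq_singleton_of_mem hp]
    obtain ⟨q, hq, rfl⟩ := hp.2
    have : (N.f j '' N.F) \ {N.f j q} = N.f j '' (N.F \ {q}) := by
      rw [image_diff (N.f j).injective, image_singleton]
    rw [this]
    exact ((hnc q hq).image _ (N.f j).continuous.continuousOn).isPreconnected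

/-- The attractor has positive diameter. -/
lemma diam_pos : 0 < Metric.diam N.F := by
  obtain ⟨x, hx⟩ := N.Fne
  obtain ⟨y, hyF, hyx⟩ := (hnc x hx).nonempty
  rw [mem_singleton_iff] at hyx
  have : 0 < dist y x := dist_pos.mpr hyx
  exact lt_of_lt_of_le this (Metric.dist_le_diam_of_mem N.Fcpt.isBounded hyF hx)

end NoCut

/-- The copies are strictly smaller in diameter. -/
lemma diam_copy_lt (hnc : N.NoCutPoints) (k : Fin N.n) :
    Metric.diam (N.f k '' N.F) < Metric.diam N.F := by
  obtain ⟨c, hc1, hcL⟩ := N.contr k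
  have h1 : Metric.diam (N.f k '' N.F) ≤ c * Metric.diam N.F := by
    apply Metric.diam_le_of_forall_dist_le (by positivity)
    rintro _ ⟨u, hu, rfl⟩ _ ⟨v, hv, rfl⟩
    calc dist (N.f k u) (N.f k v) ≤ c * dist u v := hcL.dist_le_mul u v
    _ ≤ c * Metric.diam N.F := by
        apply mul_le_mul_of_nonneg_left (Metric.dist_le_diam_of_mem N.Fcpt.isBounded hu hv)
        positivity
  have h2 : (c : ℝ) * Metric.diam N.F < Metric.diam N.F := by
    have := diam_pos hnc
    have hc1' : (c : ℝ) < 1 := hc1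
    nlinarith
  exact lt_of_le_of_lt h1 h2


section Nodes

variable (k : Fin N.n) (hzz : N.z (k - N.one) ≠ N.z k)
include hzz

omit hzz in
lemma z_mem_k' : N.z (k - N.one) ∈ N.f k '' N.F := by
  have := N.z_mem_right (k - N.one)
  rwa [sub_add_cancel] at this

/-- If `z k ∈ F_j` then `j ∈ {k, k+1}`. -/
lemma node_right_mem {j : Fin N.n} (hj : N.z k ∈ N.f j '' N.F) : j = k ∨ j = k + N.one := by
  by_contra hcon
  push_neg at hcon
  obtain ⟨h1, h2⟩ := hcon
  by_cases h3 : k = j + N.one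
  · -- j = k - 1, so z k ∈ F_{k-1} ∩ F_k = {z (k-1)}
    have hj' : j = k - N.one := by rw [h3]; abel
    have hmem : N.z k ∈ N.f j '' N.F ∩ N.f (j + N.one) '' N.F := by
      refine ⟨hj, ?_⟩
      rw [← h3]
      exact N.z_mem_left k
    rw [N.hz' j] at hmem
    rw [mem_singleton_iff] at hmem
    rw [hj'] at hmem
    exact hzz hmem.symm
  · have := N.hdisj' j k h1 h2 h3
    have hmem : N.z k ∈ N.f j '' N.F ∩ N.f k '' N.F := ⟨hj, N.z_mem_left k⟩
    rw [this] at hmem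
    exact hmem

/-- If `z (k-1) ∈ F_j` then `j ∈ {k-1, k}`. -/
lemma node_left_mem {j : Fin N.n} (hj : N.z (k - N.one) ∈ N.f j '' N.F) :
    j = k - N.one ∨ j = k := by
  by_contra hcon
  push_neg at hcon
  obtain ⟨h1, h2⟩ := hcon
  by_cases h3 : j = k + N.one
  · -- z (k-1) ∈ F_{k+1} ∩ F_k ... = {z k}
    have hmem : N.z (k - N.one) ∈ N.f k '' N.F ∩ N.f (k + N.one) '' N.F := by
      refine ⟨N.z_mem_k' k, ?_⟩
      rw [← h3]
      exact hj
    rw [N.hz' k, mem_singleton_iff] at hmem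
    exact hzz hmem
  · have h4 : k ≠ j + N.one := by
      intro h
      apply h1
      rw [h]; abel
    have := N.hdisj' j k h2 h3 h4
    have hmem : N.z (k - N.one) ∈ N.f j '' N.F ∩ N.f k '' N.F := ⟨hj, N.z_mem_k' k⟩
    rw [this] at hmem
    exact hmem

/-- Nodes `z j` for `j ∉ {k-1, k}` do not lie in `{z (k-1), z k}`. -/
lemma node_not_bdry {j : Fin N.n} (hjk : j ≠ k) (hjk1 : j ≠ k - N.one) :
    N.z j ∉ ({N.z (k - N.one), N.z k} : Set (Euc d)) := by
  rintro (h | h)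
  · have := node_left_mem k hzz (h ▸ N.z_mem_left j)
    rcases this with h' | h'
    · exact hjk1 h'
    · exact hjk h'
  · rcases node_right_mem k hzz (h ▸ N.z_mem_left j) with h' | h'
    · exact hjk h'
    · -- j = k + 1; but z j ∈ F_{j+1} as well, forcing j ∈ {k-1, k}
      rcases node_right_mem k hzz (h ▸ N.z_mem_right j) with h'' | h''
      · exact hjk1 (by
          have := congrArg (· - N.one) h''
          simpa using this)
      · exact hjk (by
          have := congrArg (· - N.one) h''
          simpa using this)

end Nodes

open Fin.NatCast in
/-- The union of all copies other than `F_k`, minus the boundary nodes of `F_k`,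
is preconnected. -/
lemma chain_preconn (hnc : N.NoCutPoints) (k : Fin N.n) {S : Set (Euc d)}
    (hzz : N.z (k - N.one) ≠ N.z k) (hS : S ⊆ {N.z (k - N.one), N.z k}) :
    IsPreconnected (⋃ j ∈ {j : Fin N.n | j ≠ k}, (N.f j '' N.F \ S)) := by
  have hn := N.hn
  -- preconnectedness of individual pieces
  have hPconn : ∀ j : Fin N.n, j ≠ k → IsPreconnected (N.f j '' N.F \ S) := by
    intro j hj
    apply copy_diff_preconnected hnc
    rintro a ⟨haS, haj⟩ b ⟨hbS, hbj⟩
    have hka : k - N.one ≠ k + N.one := by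
      intro h
      apply N.two_ne_zero'
      have h2 := congrArg (fun x => x - k + N.one) h
      calc N.one + N.one = k + N.one - k + N.one := by abel
      _ = k - N.one - k + N.one := h2.symm
      _ = 0 := by abel
    have hkey : ∀ c ∈ S, c ∈ N.f j '' N.F → (c = N.z (k - N.one) ∧ j = k - N.one) ∨
        (c = N.z k ∧ j = k + N.one) := by
      intro c hcS hcj
      rcases hS hcS with h | h
      · left
        refine ⟨h, ?_⟩
        rcases node_left_mem k hzz (h ▸ hcj) with h' | h'
        · exact h'
        · exact absurd h' hj
      · rw [mem_singleton_iff] at h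
        right
        refine ⟨h, ?_⟩
        rcases node_right_mem k hzz (h ▸ hcj) with h' | h'
        · exact absurd h' hj
        · exact h'
    rcases hkey a haS haj with ⟨ha, hja⟩ | ⟨ha, hja⟩ <;>
      rcases hkey b hbS hbj with ⟨hb, hjb⟩ | ⟨hb, hjb⟩
    · rw [ha, hb]
    · exact absurd (hja.symm.trans hjb) hka
    · exact absurd (hjb.symm.trans hja) hka
    · rw [ha, hb]
  have hcast_ne : ∀ m : ℕ, 1 ≤ m → m < N.n → ((m : Fin N.n)) ≠ 0 := by
    intro m h1 h2 h
    have h3 := congrArg Fin.val h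
    rw [Fin.val_natCast, Nat.mod_eq_of_lt h2, Fin.val_zero] at h3
    omega
  have hne_k : ∀ m : ℕ, 1 ≤ m → m < N.n → k + (m : Fin N.n) ≠ k := by
    intro m h1 h2 h
    apply hcast_ne m h1 h2
    have h3 := congrArg (fun x => x - k) h
    simpa using h3
  have hne_k1 : ∀ m : ℕ, 1 ≤ m → m + 1 < N.n → k + (m : Fin N.n) ≠ k - N.one := by
    intro m h1 h2 h
    have hc : ((m+1 : ℕ) : Fin N.n) = (m : Fin N.n) + N.one := by
      push_cast
      rw [N.one_eq]
    refine hcast_ne (m+1) (by omega) h2 ?_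
    rw [hc]
    calc (m : Fin N.n) + N.one = k + (m : Fin N.n) - k + N.one := by abel
    _ = k - N.one - k + N.one := by rw [h]
    _ = 0 := by abel
  set P : Fin N.n → Set (Euc d) := fun j => N.f j '' N.F \ S with hP
  set WW : ℕ → Set (Euc d) := fun m => ⋃ i ∈ Finset.range m, P (k + ((i+1 : ℕ) : Fin N.n)) with hWW
  have hzP : ∀ m : ℕ, 1 ≤ m → m + 1 < N.n → N.z (k + (m : Fin N.n)) ∈ P (k + (m : Fin N.n)) ∧
      N.z (k + (m : Fin N.n)) ∈ P (k + ((m+1 : ℕ) : Fin N.n)) := by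
    intro m h1 h2
    have hjk := hne_k m h1 (by omega)
    have hjk1 := hne_k1 m h1 h2
    have hnb := node_not_bdry k hzz hjk hjk1
    have hS' : N.z (k + (m : Fin N.n)) ∉ S := fun h => hnb (hS h)
    constructor
    · exact ⟨N.z_mem_left _, hS'⟩
    · refine ⟨?_, hS'⟩
      have hc : k + ((m+1 : ℕ) : Fin N.n) = (k + (m : Fin N.n)) + N.one := by
        push_cast
        rw [N.one_eq]
        abel
      rw [hc]
      exact N.z_mem_right _
  have hmain : ∀ m : ℕ, 1 ≤ m → m ≤ N.n - 1 → IsPreconnected (WW m) ∧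
      (m + 1 ≤ N.n - 1 → N.z (k + (m : Fin N.n)) ∈ WW m) := by
    intro m h1
    induction m, h1 using Nat.le_induction with
    | base =>
      intro hle
      have hW1 : WW 1 = P (k + ((1 : ℕ) : Fin N.n)) := by
        simp [hWW]
      constructor
      · rw [hW1]
        exact hPconn _ (hne_k 1 le_rfl (by omega))
      · intro hle2
        rw [hW1]
        exact (hzP 1 le_rfl (by omega)).1
    | succ m hm ih =>
      intro hle
      obtain ⟨ihc, ihz⟩ := ih (by omega)
      have hzm := hzP m hm (by omega)
      have hWs : WW (m+1) = P (k + ((m+1 : ℕ) : Fin N.n)) ∪ WW m := by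
        simp only [hWW, Finset.range_add_one, Finset.set_biUnion_insert]
      constructor
      · rw [hWs]
        exact IsPreconnected.union (N.z (k + (m : Fin N.n))) hzm.2 (ihz hle)
          (hPconn _ (hne_k (m+1) (by omega) (by omega))) ihc
      · intro hle2
        rw [hWs]
        exact Set.mem_union_left _ (hzP (m+1) (by omega) (by omega)).1
  have hfinal : (⋃ j ∈ {j : Fin N.n | j ≠ k}, (N.f j '' N.F \ S)) = WW (N.n - 1) := by
    apply Subset.antisymm
    · intro a ha
      simp only [mem_iUnion, mem_setOf_eq] at ha
      obtain ⟨j, hjk, haj⟩ := ha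
      have hjz : j - k ≠ 0 := by
        intro h
        apply hjk
        have h3 := congrArg (fun x => x + k) h
        simpa using h3
      have hv1 : 1 ≤ (j - k).val := by
        by_contra hlt
        push_neg at hlt
        exact hjz (Fin.ext (by simp only [Fin.val_zero]; omega))
      have hv2 : (j - k).val < N.n := (j - k).isLt
      simp only [hWW, mem_iUnion, Finset.mem_range]
      refine ⟨(j - k).val - 1, by omega, ?_⟩
      have he1 : ((j - k).val - 1 + 1 : ℕ) = (j - k).val := by omega
      rw [he1]
      have he2 : k + (((j - k).val : ℕ) : Fin N.n) = j := by
        rw [Fin.cast_val_eq_self]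
        abel
      rw [he2]
      exact haj
    · intro a ha
      simp only [hWW, mem_iUnion, Finset.mem_range] at ha
      obtain ⟨i, hi, hai⟩ := ha
      simp only [mem_iUnion, mem_setOf_eq]
      exact ⟨_, hne_k (i+1) (by omega) (by omega), hai⟩
  rw [hfinal]
  exact (hmain (N.n - 1) (by omega) le_rfl).1

/-- Key lemma: the image of a bounded complementary component under a single map
of the NIFS is disjoint from the attractor. -/
lemma key_disjoint (hnc : N.NoCutPoints) (k : Fin N.n) {U : Set (Euc d)}
    (hUb : IsBounded U) {x : Euc d} (hx : x ∈ N.Fᶜ)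
    (hU : U = connectedComponentIn N.Fᶜ x) :
    N.f k '' U ∩ N.F = ∅ := by
  have hn := N.hn
  set Fk := N.f k '' N.F with hFk
  set V := N.f k '' U with hV
  have hFcl : IsClosed N.F := N.Fcpt.isClosed
  have hFo : IsOpen N.Fᶜ := hFcl.isOpen_compl
  have hFkcl : IsClosed Fk := (N.Fcpt.image (N.f k).continuous).isClosed
  have hUopen : IsOpen U := by rw [hU]; exact hFo.connectedComponentIn
  have hVopen : IsOpen V := (N.f k).isOpen_image.mpr hUopen
  have hVb : IsBounded V := by
    obtain ⟨c, _, hcL⟩ := N.contr k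
    exact hcL.isBounded_image hUb
  have hVcomp : V = connectedComponentIn Fkᶜ (N.f k x) := by
    rw [hV, hU, Homeomorph.image_connectedComponentIn _ hx,
      image_compl_eq (N.f k).bijective]
  have hVFk : V ∩ Fk = ∅ := by
    have hsub : V ⊆ Fkᶜ := hVcomp ▸ connectedComponentIn_subset _ _
    rw [eq_empty_iff_forall_notMem]
    rintro a ⟨haV, haFk⟩
    exact hsub haV haFk
  rw [eq_empty_iff_forall_notMem]
  rintro e ⟨heV, heF⟩
  -- `E` is the nonempty trace of `F` inside `V`
  set E := N.F ∩ V with hE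
  have hEne : E.Nonempty := ⟨e, heF, heV⟩
  have hclosU : closure U ⊆ U ∪ N.F := by
    intro a ha
    by_cases haF : a ∈ N.F
    · exact Or.inr haF
    · left
      rw [hU]
      exact closure_connectedComponentIn_inter hFo x ⟨by rw [← hU]; exact ha, haF⟩
  have hclosV : closure V ⊆ V ∪ Fk := by
    have h1 : closure V = N.f k '' closure U := ((N.f k).image_closure U).symm
    rw [h1, ← image_union]
    exact image_mono hclosU
  have hEF : E ⊆ N.F := inter_subset_left
  have hEcl : closure E ⊆ N.F := hFcl.closure_subset_iff.mpr hEF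
  set S := closure E \ E with hS
  have hclosE_sub : closure E ⊆ E ∪ S := by
    intro a ha
    by_cases h : a ∈ E
    · exact Or.inl h
    · exact Or.inr ⟨ha, h⟩
  have hSsub : S ⊆ {N.z (k - N.one), N.z k} := by
    rintro a ⟨hac, hanE⟩
    have haF : a ∈ N.F := hEcl hac
    have haV : a ∈ closure V := closure_mono inter_subset_right hac
    have haFk : a ∈ Fk := by
      rcases hclosV haV with h | h
      · exact absurd ⟨haF, h⟩ hanE
      · exact h
    -- `a` is also in the closure of the other copies
    have hG : ∃ j : Fin N.n, j ≠ k ∧ a ∈ N.f j '' N.F := by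
      set G := ⋃ j ∈ {j : Fin N.n | j ≠ k}, N.f j '' N.F with hGdef
      have hGcl : IsClosed G :=
        Set.Finite.isClosed_biUnion (Set.toFinite _)
          (fun j _ => (N.Fcpt.image (N.f j).continuous).isClosed)
      have hEG : E ⊆ G := by
        rintro b ⟨hbF, hbV⟩
        rw [N.Fattr] at hbF
        obtain ⟨s, ⟨j, rfl⟩, hbj⟩ := hbF
        have hjk : j ≠ k := by
          rintro rfl
          rw [eq_empty_iff_forall_notMem] at hVFk
          exact hVFk b ⟨hbV, hbj⟩
        exact mem_biUnion hjk hbj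
      have : a ∈ G := hGcl.closure_subset_iff.mpr hEG hac
      simpa only [hGdef, mem_iUnion, mem_setOf_eq, exists_prop] using this
    obtain ⟨j, hjk, haj⟩ := hG
    exact N.inter_pairs j k hjk ⟨haj, haFk⟩
  have hSE : ∀ a ∈ E, a ∉ S := fun a ha hs => hs.2 ha
  by_cases hzz : N.z (k - N.one) = N.z k
  · -- the two nodes coincide: cut-point / connectedness argument
    have hS1 : S ⊆ {N.z k} := by rw [hzz, pair_eq_singleton] at hSsub; exact hSsub
    have hFS : IsPreconnected (N.F \ S) := by
      rcases S.eq_empty_or_nonempty with h | ⟨s, hs⟩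
      · rw [h, diff_empty]
        exact (F_conn hnc).isPreconnected
      · have hSeq : S = {N.z k} := by
          apply Subset.antisymm hS1
          intro b hb
          rw [mem_singleton_iff] at hb
          subst hb
          have := hS1 hs
          rw [mem_singleton_iff] at this
          rwa [← this]
        rw [hSeq]
        exact (hnc (N.z k) (N.copy_subset k (N.z_mem_left k))).isPreconnected
    obtain ⟨w, hwF, hw1, _⟩ := exists_third hnc ((N.f k).symm (N.z k)) ((N.f k).symm (N.z k))
    set b := N.f k w with hb
    have hbFk : b ∈ Fk := mem_image_of_mem _ hwF
    have hbz : b ≠ N.z k := by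
      intro h
      apply hw1
      rw [← h, hb]
      simp
    have hbF : b ∈ N.F := N.copy_subset k hbFk
    have hbnE : b ∉ E := by
      rintro ⟨_, hbV⟩
      rw [eq_empty_iff_forall_notMem] at hVFk
      exact hVFk b ⟨hbV, hbFk⟩
    have hbS : b ∉ S := fun h => hbz (hS1 h)
    have hbnc : b ∉ closure E := by
      intro h
      rcases hclosE_sub h with h' | h'
      · exact hbnE h'
      · exact hbS h'
    obtain ⟨a, ⟨haFS, haVc⟩⟩ := hFS V (closure E)ᶜ hVopen isClosed_closure.isOpen_compl
      (by
        rintro a ⟨haF, haS⟩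
        by_cases hc : a ∈ closure E
        · rcases hclosE_sub hc with h' | h'
          · exact Or.inl h'.2
          · exact absurd h' haS
        · exact Or.inr hc)
      ⟨e, ⟨heF, fun h => hSE e ⟨heF, heV⟩ h⟩, heV⟩
      ⟨b, ⟨hbF, hbS⟩, hbnc⟩
    obtain ⟨haV, hacE⟩ := haVc
    exact hacE (subset_closure ⟨haFS.1, haV⟩)
  · -- distinct nodes: chain argument and the diameter contradiction
    have hchain := chain_preconn hnc k hzz hSsub
    set Gd := ⋃ j ∈ {j : Fin N.n | j ≠ k}, (N.f j '' N.F \ S) with hGd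
    have hGdF : Gd ⊆ N.F := by
      rintro a ha
      simp only [hGd, mem_iUnion, mem_setOf_eq, exists_prop] at ha
      obtain ⟨j, _, haj, _⟩ := ha
      exact N.copy_subset j haj
    have hEGd : E ⊆ Gd := by
      rintro a ⟨haF, haV⟩
      rw [N.Fattr] at haF
      obtain ⟨s, ⟨j, rfl⟩, haj⟩ := haF
      have hjk : j ≠ k := by
        rintro rfl
        rw [eq_empty_iff_forall_notMem] at hVFk
        exact hVFk a ⟨haV, haj⟩
      have haS : a ∉ S := hSE a ⟨N.copy_subset j haj, haV⟩
      simp only [hGd, mem_iUnion, mem_setOf_eq, exists_prop]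
      exact ⟨j, hjk, haj, haS⟩
    have hGdE : Gd ⊆ E := by
      intro g hg
      by_contra hgE
      have hgcE : g ∉ closure E := by
        intro h
        rcases hclosE_sub h with h' | h'
        · exact hgE h'
        · -- g ∈ S, but elements of Gd avoid S
          simp only [hGd, mem_iUnion, mem_setOf_eq, exists_prop] at hg
          obtain ⟨j, _, _, hgS⟩ := hg
          exact hgS h'
      obtain ⟨a, haGd, haV, hacE⟩ := hchain V (closure E)ᶜ hVopen
        isClosed_closure.isOpen_compl
        (by
          intro a ha
          by_cases hc : a ∈ closure E
          · rcases hclosE_sub hc with h' | h'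
            · exact Or.inl h'.2
            · simp only [hGd, mem_iUnion, mem_setOf_eq, exists_prop] at ha
              obtain ⟨j, _, _, haS⟩ := ha
              exact absurd h' haS
          · exact Or.inr hc)
        ⟨e, hEGd ⟨heF, heV⟩, heV⟩
        ⟨g, hg, hgcE⟩
      exact hacE (subset_closure ⟨hGdF haGd, haV⟩)
    -- now `F ⊆ F_k ∪ V`
    have hFV : N.F ⊆ Fk ∪ V := by
      intro a haF
      rw [N.Fattr] at haF
      obtain ⟨s, ⟨j, rfl⟩, haj⟩ := haF
      by_cases hjk : j = k
      · subst hjk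
        exact Or.inl haj
      · by_cases haS : a ∈ S
        · left
          rcases hSsub haS with h | h
          · rw [h]
            exact N.z_mem_k' k
          · rw [mem_singleton_iff] at h
            rw [h]
            exact N.z_mem_left k
        · right
          have : a ∈ Gd := by
            simp only [hGd, mem_iUnion, mem_setOf_eq, exists_prop]
            exact ⟨j, hjk, haj, haS⟩
          exact (hGdE this).2
    -- diameter contradiction
    have hFkne : Fk.Nonempty := N.Fne.image _
    have hFkb : IsBounded Fk := (N.Fcpt.image (N.f k).continuous).isBounded
    have hesc : ∀ v ∈ V, ∀ p : Euc d, ∃ y ∈ Fk, dist v p ≤ dist y p := by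
      intro v hv p
      exact dist_le_of_mem_bounded_component hFkne hVb hVcomp hv p
    have hclaim1 : ∀ v ∈ V, ∀ p ∈ Fk, dist v p ≤ Metric.diam Fk := by
      intro v hv p hp
      obtain ⟨y, hy, hle⟩ := hesc v hv p
      exact hle.trans (Metric.dist_le_diam_of_mem hFkb hy hp)
    have hdiam : Metric.diam N.F ≤ Metric.diam Fk := by
      apply Metric.diam_le_of_forall_dist_le Metric.diam_nonneg
      intro a ha b hb
      rcases hFV ha with hak | hav <;> rcases hFV hb with hbk | hbv
      · exact Metric.dist_le_diam_of_mem hFkb hak hbk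
      · rw [dist_comm]
        exact hclaim1 b hbv a hak
      · exact hclaim1 a hav b hbk
      · obtain ⟨y, hy, hle⟩ := hesc a hav b
        exact hle.trans (by rw [dist_comm]; exact hclaim1 b hbv y hy)
    exact absurd hdiam (not_le.mpr (diam_copy_lt hnc k))


/-- Full single-letter step: image of a bounded component is a bounded component. -/
lemma key_step (hnc : N.NoCutPoints) (k : Fin N.n) {U : Set (Euc d)}
    (hUb : IsBounded U) {x : Euc d} (hx : x ∈ N.Fᶜ)
    (hU : U = connectedComponentIn N.Fᶜ x) :
    (∃ x' ∈ N.Fᶜ, N.f k '' U = connectedComponentIn N.Fᶜ x') ∧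
      IsBounded (N.f k '' U) ∧ N.f k '' U ∩ N.F = ∅ := by
  have hFcl : IsClosed N.F := N.Fcpt.isClosed
  have hFo : IsOpen N.Fᶜ := hFcl.isOpen_compl
  set Fk := N.f k '' N.F with hFk
  set V := N.f k '' U with hV
  have hVb : IsBounded V := by
    obtain ⟨c, _, hcL⟩ := N.contr k
    exact hcL.isBounded_image hUb
  have hdisj : V ∩ N.F = ∅ := key_disjoint hnc k hUb hx hU
  have hVsub : V ⊆ N.Fᶜ := by
    intro a ha haF
    rw [eq_empty_iff_forall_notMem] at hdisj
    exact hdisj a ⟨ha, haF⟩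
  have hxU : x ∈ U := hU ▸ mem_connectedComponentIn hx
  have hx' : N.f k x ∈ V := mem_image_of_mem _ hxU
  have hx'F : N.f k x ∈ N.Fᶜ := hVsub hx'
  refine ⟨⟨N.f k x, hx'F, ?_⟩, hVb, hdisj⟩
  -- closure of V escapes only into F_k
  have hclosU : closure U ⊆ U ∪ N.F := by
    intro a ha
    by_cases haF : a ∈ N.F
    · exact Or.inr haF
    · left
      rw [hU]
      exact closure_connectedComponentIn_inter hFo x ⟨by rw [← hU]; exact ha, haF⟩
  have hclosV : closure V ⊆ V ∪ Fk := by
    have h1 : closure V = N.f k '' closure U := ((N.f k).image_closure U).symm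
    rw [h1, ← image_union]
    exact image_mono hclosU
  have hVpre : IsPreconnected V := by
    rw [hV, hU]
    exact isPreconnected_connectedComponentIn.image _ (N.f k).continuous.continuousOn
  apply Subset.antisymm
  · exact hVpre.subset_connectedComponentIn hx' hVsub
  · set C := connectedComponentIn N.Fᶜ (N.f k x) with hC
    have hCpre : IsPreconnected C := isPreconnected_connectedComponentIn
    have hCF : C ⊆ N.Fᶜ := connectedComponentIn_subset _ _
    have hCV : C ⊆ closure V := by
      by_contra hcon
      rw [not_subset] at hcon
      obtain ⟨g, hgC, hgcl⟩ := hcon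
      obtain ⟨a, haC, haV, hacl⟩ := hCpre V (closure V)ᶜ
        ((N.f k).isOpen_image.mpr (hU ▸ hFo.connectedComponentIn))
        isClosed_closure.isOpen_compl
        (by
          intro a haC
          by_cases hc : a ∈ closure V
          · rcases hclosV hc with h | h
            · exact Or.inl h
            · exact absurd (N.copy_subset k h) (hCF haC)
          · exact Or.inr hc)
        ⟨N.f k x, mem_connectedComponentIn hx'F, hx'⟩
        ⟨g, hgC, hgcl⟩
      exact hacl (subset_closure haV)
    intro a haC
    rcases hclosV (hCV haC) with h | h
    · exact h
    · exact absurd (N.copy_subset k h) (hCF haC)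

end Necklace

/-- Let `F` be a planar necklace with no cut points and `U` a bounded connected component
of `ℝ² \ F`.  Then for every finite word `σ`, `f_σ(U)` is a bounded connected component
of `ℝ² \ F`; in particular `f_σ(U) ∩ F = ∅`. -/
theorem Necklace.image_of_bounded_component {N : Necklace 2} (hnc : N.NoCutPoints)
    (U : Set (Euc 2)) (hUbdd : IsBounded U)
    (hUcomp : ∃ x ∈ N.Fᶜ, U = connectedComponentIn N.Fᶜ x)
    (σ : List (Fin N.n)) :
    (∃ x ∈ N.Fᶜ, N.word σ '' U = connectedComponentIn N.Fᶜ x) ∧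
      IsBounded (N.word σ '' U) ∧ N.word σ '' U ∩ N.F = ∅ := by
  induction σ with
  | nil =>
    have himg : N.word [] '' U = U := by
      simp [Necklace.word]
    rw [himg]
    obtain ⟨x, hx, hU⟩ := hUcomp
    refine ⟨⟨x, hx, hU⟩, hUbdd, ?_⟩
    rw [eq_empty_iff_forall_notMem]
    rintro a ⟨haU, haF⟩
    exact (hU ▸ connectedComponentIn_subset _ _) haU haF
  | cons i s ih =>
    obtain ⟨⟨x', hx', hcomp⟩, hb, _⟩ := ih
    have himg : N.word (i :: s) '' U = N.f i '' (N.word s '' U) := by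
      rw [Set.image_image]
      rfl
    rw [himg]
    exact N.key_step hnc i hb hx' hcomp
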